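/- Let D ∈ ℕ, p ≤ D, and let I be a subset of Fin D of cardinality p, with complement Iᶜ of cardinality D − p. Let σ_I be the permutation of Fin D that sends 0,…,p−1 (in order) to the elements of I listed in increasing order and sends p,…,D−1 (in order) to the elements of Iᶜ listed in increasing order; likewise let σ_{Iᶜ} be the permutation sending 0,…,D−p−1 to the elements of Iᶜ in increasing order and D−p,…,D−1 to the elements of I in increasing order. Then sign(σ_I) · sign(σ_{Iᶜ}) = (−1)^{p(D−p)}. -/

import Mathlib

/-- The "merge" permutation of `Fin D` associated with a subset `I`: it sends
`0, …, I.card - 1` (in order) to the elements of `I` listed in increasing order, and sends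
`I.card, …, D - 1` (in order) to the elements of `Iᶜ` listed in increasing order. -/
noncomputable def mergePerm {D : ℕ} (I : Finset (Fin D)) : Equiv.Perm (Fin D) :=
  ((finCongr (show I.card + Iᶜ.card = D by
      rw [Finset.card_add_card_compl, Fintype.card_fin])).symm).trans
    (finSumFinEquiv.symm.trans
      (((I.orderIsoOfFin rfl).toEquiv.sumCongr (Iᶜ.orderIsoOfFin rfl).toEquiv).trans
        (((Equiv.refl _).sumCongr
            (Equiv.subtypeEquivRight fun x => Finset.mem_compl)).trans
          (Equiv.sumCompl (· ∈ I)))))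

open Fin.NatCast

lemma card_add_compl {D : ℕ} (I : Finset (Fin D)) : I.card + Iᶜ.card = D := by
  rw [Finset.card_add_card_compl, Fintype.card_fin]

lemma mergePerm_apply_left {D : ℕ} (I : Finset (Fin D)) (i : Fin I.card) :
    mergePerm I (finCongr (card_add_compl I) (Fin.castAdd Iᶜ.card i)) =
      ↑(I.orderIsoOfFin rfl i) := by
  simp [mergePerm]

lemma mergePerm_apply_right {D : ℕ} (I : Finset (Fin D)) (j : Fin Iᶜ.card) :
    mergePerm I (finCongr (card_add_compl I) (Fin.natAdd I.card j)) =
      ↑(Iᶜ.orderIsoOfFin rfl j) := by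
  simp [mergePerm]

lemma orderIsoOfFin_congr {α : Type*} [LinearOrder α] {I J : Finset α} (h : I = J)
    (i : Fin I.card) :
    (I.orderIsoOfFin rfl i : α) = J.orderIsoOfFin rfl (Fin.cast (by rw [h]) i) := by
  subst h; rfl

lemma finRotate_pow_apply (n k : ℕ) (x : Fin (n+1)) :
    ((finRotate (n+1)) ^ k) x = x + (k : Fin (n+1)) := by
  induction k with
  | zero => simp
  | succ k ih =>
    rw [pow_succ', Equiv.Perm.mul_apply, finRotate_succ_apply, ih]
    push_cast
    exact add_assoc _ _ _

lemma mergePerm_compl_apply {D p : ℕ} [NeZero D] (hp : p ≤ D) (I : Finset (Fin D))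
    (hI : I.card = p) (x : Fin D) : mergePerm Iᶜ x = mergePerm I (x + (p : Fin D)) := by
  have hD : 0 < D := Nat.pos_of_ne_zero (NeZero.ne D)
  have hq : Iᶜ.card = D - p := by
    rw [Finset.card_compl, Fintype.card_fin, hI]
  have hcc : Iᶜᶜ = I := compl_compl I
  have hccc : Iᶜᶜ.card = p := by rw [hcc, hI]
  have hx : x = finCongr (card_add_compl Iᶜ)
      (finSumFinEquiv (finSumFinEquiv.symm ((finCongr (card_add_compl Iᶜ)).symm x))) := by
    simp
  have hpD : p % D = p ∨ (p = D ∧ p % D = 0) := by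
    rcases lt_or_eq_of_le hp with h | h
    · exact Or.inl (Nat.mod_eq_of_lt h)
    · exact Or.inr ⟨h, by simp [h]⟩
  rcases hz : finSumFinEquiv.symm ((finCongr (card_add_compl Iᶜ)).symm x) with j | i
  · -- x corresponds to position j in the first block (of size Iᶜ.card = D - p)
    rw [hz, finSumFinEquiv_apply_left] at hx
    have hj : (j : ℕ) < D - p := hq ▸ j.isLt
    have hxp : x + (p : Fin D) = finCongr (card_add_compl I)
        (Fin.natAdd I.card (Fin.cast hq.symm ⟨(j : ℕ), hj⟩)) := by
      apply Fin.ext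
      rw [Fin.add_def]
      simp only [hx, finCongr_apply, Fin.coe_cast, Fin.coe_castAdd, Fin.coe_natAdd,
        Fin.val_natCast, hI]
      rcases hpD with h | ⟨h1, h2⟩
      · rw [h, Nat.mod_eq_of_lt (by omega)]; omega
      · omega
    rw [hxp, mergePerm_apply_right]
    conv_lhs => rw [hx]
    rw [mergePerm_apply_left Iᶜ]
    rfl
  · -- x corresponds to position i in the second block (of size Iᶜᶜ.card = p)
    rw [hz, finSumFinEquiv_apply_right] at hx
    have hi : (i : ℕ) < p := hccc ▸ i.isLt
    have hxp : x + (p : Fin D) = finCongr (card_add_compl I)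
        (Fin.castAdd Iᶜ.card ⟨(i : ℕ), hI ▸ hi⟩) := by
      apply Fin.ext
      rw [Fin.add_def]
      simp only [hx, finCongr_apply, Fin.coe_cast, Fin.coe_castAdd, Fin.coe_natAdd,
        Fin.val_natCast, hq]
      rcases hpD with h | ⟨h1, h2⟩
      · rw [h]
        have he : D - p + (i : ℕ) + p = D + i := by omega
        rw [he, Nat.add_mod_left, Nat.mod_eq_of_lt (by omega)]
      · rw [h2]
        have he : D - p + (i : ℕ) + 0 = i := by omega
        rw [he, Nat.mod_eq_of_lt (by omega)]
    rw [hxp, mergePerm_apply_left]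
    conv_lhs => rw [hx]
    rw [mergePerm_apply_right Iᶜ]
    exact orderIsoOfFin_congr hcc i

lemma neg_one_pow_units_eq {a b : ℕ} (h : a % 2 = b % 2) : ((-1 : ℤˣ)) ^ a = (-1) ^ b := by
  conv_lhs => rw [← Nat.div_add_mod a 2]
  conv_rhs => rw [← Nat.div_add_mod b 2]
  rw [pow_add, pow_add, pow_mul, pow_mul, h]
  norm_num

/-- For a `p`-element subset `I` of `Fin D`, the product of the signs of the merge
permutation of `I` and of the merge permutation of its complement `Iᶜ` is
`(-1) ^ (p * (D - p))`. -/
theorem sign_mergePerm_mul_sign_mergePerm_compl (D p : ℕ) (hp : p ≤ D)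
    (I : Finset (Fin D)) (hI : I.card = p) :
    Equiv.Perm.sign (mergePerm I) * Equiv.Perm.sign (mergePerm Iᶜ) =
      (-1 : ℤˣ) ^ (p * (D - p)) := by
  rcases D with _ | n
  · interval_cases p
    have h1 : mergePerm I = 1 := Subsingleton.elim _ _
    have h2 : mergePerm Iᶜ = 1 := Subsingleton.elim _ _
    simp [h1, h2]
  · have key : mergePerm Iᶜ = mergePerm I * (finRotate (n+1)) ^ p := by
      apply Equiv.ext
      intro x
      rw [Equiv.Perm.mul_apply, finRotate_pow_apply]
      exact mergePerm_compl_apply hp I hI x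
    rw [key, map_mul, ← mul_assoc, Int.units_mul_self, one_mul, map_pow, sign_finRotate,
      ← pow_mul]
    apply neg_one_pow_units_eq
    have hiff : Even (n * p) ↔ Even (p * (n + 1 - p)) := by
      rw [Nat.even_mul, Nat.even_mul]
      rcases Nat.even_or_odd p with he | ho
      · tauto
      · obtain ⟨k, hk⟩ := ho
        simp only [Nat.even_iff]
        omega
    rw [Nat.even_iff, Nat.even_iff] at hiff
    rw [Nat.add_sub_cancel]
    omega
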